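/- Let F be a finite field with q elements, C ≤ F^Ω a code of dimension k with generator matrix G and column map τ. Suppose there exists σ ∈ ℝ with Σ_{i ∈ χ(C), τ(i) ∈ I} ω(i) = σ for every 1-dimensional subspace I ≤ F^{[k]}. Then for every subspace D ≤ C with dim D = s, the ω-weight of D satisfies Wt(D) = (q^k − q^{k−s})σ/(q − 1). -/

import Mathlib

open scoped Classical
open Finset

/-- ω-weight of a vector β ∈ F^Ω. -/
noncomputable def wwt {F Ω : Type*} [Field F] [Fintype Ω] (ω : Ω → ℝ) (β : Ω → F) : ℝ :=
  ∑ i ∈ univ.filter (fun i => β i ≠ 0), ω i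

/-- ω-weight of a set A ⊆ F^Ω. -/
noncomputable def WWt {F Ω : Type*} [Field F] [Fintype Ω] (ω : Ω → ℝ) (A : Set (Ω → F)) : ℝ :=
  ∑ i ∈ univ.filter (fun i => ∃ β ∈ A, β i ≠ 0), ω i

/-- The dot-product bilinear form on `n → F`. -/
noncomputable def dotForm (F : Type*) [Field F] (n : Type*) [Fintype n] :
    LinearMap.BilinForm F (n → F) :=
  LinearMap.mk₂ F (fun x y => dotProduct x y)
    (fun x y z => add_dotProduct x y z)
    (fun c x y => smul_dotProduct c x y)
    (fun x y z => dotProduct_add x y z)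
    (fun c x y => dotProduct_smul c x y)

lemma dotForm_apply {F : Type*} [Field F] {n : Type*} [Fintype n] (x y : n → F) :
    dotForm F n x y = dotProduct x y := rfl

lemma dotForm_refl {F : Type*} [Field F] {n : Type*} [Fintype n] :
    (dotForm F n).IsRefl := by
  intro x y hxy
  rw [dotForm_apply, dotProduct_comm] at hxy
  exact hxy

lemma dotForm_nondegenerate {F : Type*} [Field F] {n : Type*} [Fintype n] :
    (dotForm F n).Nondegenerate := by
  refine ⟨fun x hx => ?_, fun x hx => ?_⟩
  · ext j
    have := hx (Pi.single j 1)
    rw [dotForm_apply, dotProduct_single] at this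
    simpa using this
  · ext j
    have := hx (Pi.single j 1)
    rw [dotForm_apply, single_dotProduct] at this
    simpa using this

set_option maxHeartbeats 1000000 in
theorem stmt13 {F Ω : Type*} [Field F] [Fintype F] [Fintype Ω] [Nonempty Ω]
    (q : ℕ) (hq : Fintype.card F = q)
    (ω : Ω → ℝ) (hω : ∀ i, 0 < ω i)
    (k : ℕ) (hk1 : 1 ≤ k) (G : Matrix (Fin k) Ω F)
    (C : Submodule F (Ω → F)) (hdim : Module.finrank F C = k)
    (hG : (C : Set (Ω → F)) = Set.range (fun γ : Fin k → F => Matrix.vecMul γ G))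
    (σ : ℝ)
    (h : ∀ I : Submodule F (Fin k → F), Module.finrank F I = 1 →
      (∑ i ∈ univ.filter
          (fun i => (∃ β ∈ C, β i ≠ 0) ∧ (fun r => G r i) ∈ I), ω i) = σ)
    (D : Submodule F (Ω → F)) (hD : D ≤ C) (s : ℕ) (hs : Module.finrank F D = s) :
    WWt ω (D : Set (Ω → F)) = ((q : ℝ) ^ k - (q : ℝ) ^ (k - s)) * σ / ((q : ℝ) - 1) := by
  classical
  have hq2 : 2 ≤ q := hq ▸ Fintype.one_lt_card
  set L : (Fin k → F) →ₗ[F] (Ω → F) := G.vecMulLinear with hLdef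
  have hrange : LinearMap.range L = C := by
    apply SetLike.coe_injective
    rw [hG]
    ext x
    simp [hLdef, LinearMap.mem_range, Set.mem_range]
  -- L is injective
  have hker : LinearMap.ker L = ⊥ := by
    have h1 := LinearMap.finrank_range_add_finrank_ker L
    rw [hrange, hdim, Module.finrank_fin_fun] at h1
    have h2 : Module.finrank F (LinearMap.ker L) = 0 := by omega
    exact Submodule.finrank_eq_zero.mp h2
  have hinj : Function.Injective L := LinearMap.ker_eq_bot.mp hker
  set E : Submodule F (Fin k → F) := D.comap L with hEdef
  have hmapE : E.map L = D := by
    rw [hEdef, Submodule.map_comap_eq, hrange, inf_eq_right.mpr hD]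
  have hEs : Module.finrank F E = s := by
    have := (Submodule.equivMapOfInjective L hinj E).finrank_eq
    rw [hmapE] at this
    rw [this, hs]
  -- orthogonal complement
  set B := dotForm F (Fin k) with hBdef
  set E' : Submodule F (Fin k → F) := B.orthogonal E with hE'def
  have hE's : Module.finrank F E' = k - s := by
    rw [hE'def, LinearMap.BilinForm.finrank_orthogonal dotForm_nondegenerate,
      Module.finrank_fin_fun, hEs]
  have hmemE' : ∀ v : Fin k → F, v ∈ E' ↔ ∀ γ ∈ E, dotProduct γ v = 0 := by
    intro v
    rw [hE'def, LinearMap.BilinForm.mem_orthogonal_iff]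
    rfl
  -- τ i
  set τ : Ω → (Fin k → F) := fun i => fun r => G r i with hτdef
  have hvecMul : ∀ (γ : Fin k → F) (i : Ω), Matrix.vecMul γ G i = dotProduct γ (τ i) := by
    intro γ i
    rfl
  -- P i ↔ τ i ≠ 0
  have hP : ∀ i : Ω, (∃ β ∈ C, β i ≠ 0) ↔ τ i ≠ 0 := by
    intro i
    constructor
    · rintro ⟨β, hβ, hβi⟩
      have : β ∈ LinearMap.range L := hrange ▸ hβ
      obtain ⟨γ, rfl⟩ := this
      intro h0
      apply hβi
      show Matrix.vecMul γ G i = 0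
      rw [hvecMul, h0, dotProduct_zero]
    · intro hτ
      obtain ⟨r, hr⟩ : ∃ r, τ i r ≠ 0 := by
        by_contra hc
        push_neg at hc
        exact hτ (funext hc)
      refine ⟨L (Pi.single r 1), hrange ▸ LinearMap.mem_range_self L _, ?_⟩
      show Matrix.vecMul (Pi.single r 1) G i ≠ 0
      rw [hvecMul, single_dotProduct, one_mul]
      exact hr
  -- Q i ↔ τ i ∉ E'
  have hQ : ∀ i : Ω, (∃ β ∈ (D : Set (Ω → F)), β i ≠ 0) ↔ τ i ∉ E' := by
    intro i
    constructor
    · rintro ⟨β, hβ, hβi⟩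
      have : β ∈ LinearMap.range L := hrange ▸ hD hβ
      obtain ⟨γ, rfl⟩ := this
      have hγE : γ ∈ E := hβ
      intro hmem
      apply hβi
      show Matrix.vecMul γ G i = 0
      rw [hvecMul]
      exact (hmemE' (τ i)).mp hmem γ hγE
    · intro hmem
      rw [hmemE'] at hmem
      push_neg at hmem
      obtain ⟨γ, hγE, hγ⟩ := hmem
      refine ⟨L γ, hγE, ?_⟩
      show Matrix.vecMul γ G i ≠ 0
      rw [hvecMul]
      exact hγ
  -- 0 ∈ E'
  have h0E' : (0 : Fin k → F) ∈ E' := by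
    rw [hmemE']
    intro γ _
    exact dotProduct_zero γ
  -- the finset of "good" vectors
  set S : Finset (Fin k → F) := univ.filter (fun v => v ∉ E') with hSdef
  have hcardE' : Fintype.card E' = q ^ (k - s) := by
    rw [Module.card_eq_pow_finrank (K := F) (V := E'), hq, hE's]
  have hcardS : S.card = q ^ k - q ^ (k - s) := by
    rw [hSdef, Finset.filter_not, Finset.card_sdiff_of_subset (Finset.filter_subset _ _)]
    congr 1
    · rw [Finset.card_univ, Fintype.card_fun, hq, Fintype.card_fin]
    · rw [← hcardE', Fintype.card_subtype]
  -- each v in S gives a line, and the inner sum is σ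
  have hvS : ∀ v ∈ S, v ≠ 0 := by
    intro v hv
    rw [hSdef, Finset.mem_filter] at hv
    intro h0
    exact hv.2 (h0 ▸ h0E')
  have hline : ∀ v ∈ S,
      (∑ i ∈ univ.filter
          (fun i => (∃ β ∈ C, β i ≠ 0) ∧ τ i ∈ Submodule.span F {v}), ω i) = σ := by
    intro v hv
    exact h (Submodule.span F {v}) (finrank_span_singleton (hvS v hv))
  -- the double sum
  have hT : (∑ v ∈ S, ∑ i ∈ univ.filter
      (fun i => (∃ β ∈ C, β i ≠ 0) ∧ τ i ∈ Submodule.span F {v}), ω i) = S.card • σ := by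
    rw [Finset.sum_congr rfl hline, Finset.sum_const]
  -- swap the double sum
  have hswap : (∑ v ∈ S, ∑ i ∈ univ.filter
      (fun i => (∃ β ∈ C, β i ≠ 0) ∧ τ i ∈ Submodule.span F {v}), ω i)
      = ∑ i : Ω, ∑ v ∈ S,
          if (∃ β ∈ C, β i ≠ 0) ∧ τ i ∈ Submodule.span F {v} then ω i else 0 := by
    rw [← Finset.sum_comm]
    apply Finset.sum_congr rfl
    intro v _
    rw [Finset.sum_filter]
  -- evaluate inner sum for each i
  have hinner : ∀ i : Ω, (∑ v ∈ S,
      if (∃ β ∈ C, β i ≠ 0) ∧ τ i ∈ Submodule.span F {v} then ω i else 0)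
      = if τ i ∉ E' then (q - 1 : ℝ) * ω i else 0 := by
    intro i
    by_cases hi : τ i ∉ E'
    · rw [if_pos hi]
      have hτ0 : τ i ≠ 0 := fun h0 => hi (h0 ▸ h0E')
      have hset : S.filter (fun v => τ i ∈ Submodule.span F {v})
          = univ.filter (fun v => v ∈ Submodule.span F {τ i} ∧ v ≠ 0) := by
        ext v
        simp only [hSdef, Finset.mem_filter, Finset.mem_univ, true_and]
        constructor
        · rintro ⟨hvE', hvsp⟩
          obtain ⟨c, hc⟩ := Submodule.mem_span_singleton.mp hvsp
          have hv0 : v ≠ 0 := by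
            intro h0
            exact hvE' (h0 ▸ h0E')
          have hc0 : c ≠ 0 := by
            rintro rfl
            rw [zero_smul] at hc
            exact hτ0 hc.symm
          refine ⟨Submodule.mem_span_singleton.mpr ⟨c⁻¹, ?_⟩, hv0⟩
          rw [← hc, smul_smul, inv_mul_cancel₀ hc0, one_smul]
        · rintro ⟨hvsp, hv0⟩
          obtain ⟨c, hc⟩ := Submodule.mem_span_singleton.mp hvsp
          have hc0 : c ≠ 0 := by
            rintro rfl
            rw [zero_smul] at hc
            exact hv0 hc.symm
          constructor
          · intro hvE'
            apply hi
            have := E'.smul_mem c⁻¹ hvE'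
            rwa [← hc, smul_smul, inv_mul_cancel₀ hc0, one_smul] at this
          · exact Submodule.mem_span_singleton.mpr ⟨c⁻¹, by
              rw [← hc, smul_smul, inv_mul_cancel₀ hc0, one_smul]⟩
      have hcard : (S.filter (fun v => τ i ∈ Submodule.span F {v})).card = q - 1 := by
        rw [hset]
        have hfe : univ.filter (fun v => v ∈ Submodule.span F {τ i} ∧ v ≠ 0)
            = (univ.filter (fun v => v ∈ Submodule.span F {τ i})).erase 0 := by
          ext v
          simp only [Finset.mem_filter, Finset.mem_univ, true_and, Finset.mem_erase]
          tauto
        rw [hfe, Finset.card_erase_of_mem]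
        · congr 1
          rw [← Fintype.card_subtype (p := fun v => v ∈ Submodule.span F {τ i})]
          rw [Module.card_eq_pow_finrank (K := F) (V := Submodule.span F {τ i}), hq,
            finrank_span_singleton hτ0, pow_one]
        · simp only [Finset.mem_filter, Finset.mem_univ, true_and]
          exact Submodule.zero_mem _
      calc (∑ v ∈ S, if (∃ β ∈ C, β i ≠ 0) ∧ τ i ∈ Submodule.span F {v} then ω i else 0)
          = ∑ v ∈ S, if τ i ∈ Submodule.span F {v} then ω i else 0 := by
            apply Finset.sum_congr rfl
            intro v _
            congr 1
            simp only [eq_iff_iff]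
            constructor
            · exact fun hh => hh.2
            · exact fun hh => ⟨(hP i).mpr hτ0, hh⟩
        _ = (S.filter (fun v => τ i ∈ Submodule.span F {v})).card • ω i := by
            rw [← Finset.sum_filter, Finset.sum_const]
        _ = (q - 1 : ℝ) * ω i := by
            rw [hcard, nsmul_eq_mul, Nat.cast_sub (by omega), Nat.cast_one]
    · rw [if_neg hi]
      push_neg at hi
      apply Finset.sum_eq_zero
      intro v hv
      rw [hSdef, Finset.mem_filter] at hv
      rw [if_neg]
      rintro ⟨hPi, hvsp⟩
      have hτ0 : τ i ≠ 0 := (hP i).mp hPi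
      obtain ⟨c, hc⟩ := Submodule.mem_span_singleton.mp hvsp
      have hc0 : c ≠ 0 := by
        rintro rfl
        rw [zero_smul] at hc
        exact hτ0 hc.symm
      apply hv.2
      have h1 : c • v ∈ E' := by rw [hc]; exact hi
      have h2 := E'.smul_mem c⁻¹ h1
      rwa [smul_smul, inv_mul_cancel₀ hc0, one_smul] at h2
  -- put it together
  have hfinal : (S.card : ℝ) * σ = ((q : ℝ) - 1) * WWt ω (D : Set (Ω → F)) := by
    have h1 : (S.card : ℝ) * σ = ∑ i : Ω, ∑ v ∈ S,
        if (∃ β ∈ C, β i ≠ 0) ∧ τ i ∈ Submodule.span F {v} then ω i else 0 := by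
      rw [← hswap, hT, nsmul_eq_mul]
    rw [h1, Finset.sum_congr rfl (fun i _ => hinner i)]
    have h2 : (∑ i : Ω, if τ i ∉ E' then ((q : ℝ) - 1) * ω i else 0)
        = ∑ i ∈ univ.filter (fun i => τ i ∉ E'), ((q : ℝ) - 1) * ω i := by
      rw [Finset.sum_filter]
    rw [h2, ← Finset.mul_sum]
    congr 1
    rw [WWt]
    apply Finset.sum_congr
    · ext i
      simp only [Finset.mem_filter, Finset.mem_univ, true_and]
      exact (hQ i).symm
    · intro i _
      rfl
  have hq1 : ((q : ℝ) - 1) ≠ 0 := by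
    have : (2 : ℝ) ≤ (q : ℝ) := by exact_mod_cast hq2
    linarith
  have hcast : (S.card : ℝ) = (q : ℝ) ^ k - (q : ℝ) ^ (k - s) := by
    rw [hcardS, Nat.cast_sub (Nat.pow_le_pow_right (by omega) (Nat.sub_le k s))]
    push_cast
    ring
  rw [eq_div_iff hq1, ← hcast, hfinal]
  ring
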